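/- For all real numbers β₁, β₂ with 0 < β₁ < β₂, the function F_{β₁,β₂}(x) := β₁·x − 1 + (β₂·x + 1)·exp(−x·(β₁+β₂)) has exactly one zero x₁ in the open interval (0, ∞), and this zero satisfies x₁ < 1/β₁. -/

import Mathlib

open Real Set Filter


/-- Hamilton football angle function: `F β₁ β₂ x = β₁x − 1 + (β₂x + 1) e^{−x(β₁+β₂)}`. -/
noncomputable def F (β₁ β₂ x : ℝ) : ℝ :=
  β₁ * x - 1 + (β₂ * x + 1) * Real.exp (-x * (β₁ + β₂))

noncomputable def G (β₁ β₂ x : ℝ) : ℝ :=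
  β₁ - Real.exp (-x * (β₁ + β₂)) * (β₁ + β₂ * (β₁ + β₂) * x)

lemma hasDerivAt_F (β₁ β₂ x : ℝ) : HasDerivAt (F β₁ β₂) (G β₁ β₂ x) x := by
  have h1 : HasDerivAt (fun x : ℝ => -x * (β₁ + β₂)) (-(β₁ + β₂)) x := by
    simpa using ((hasDerivAt_id x).neg.mul_const (β₁ + β₂))
  have h2 := h1.exp
  have h3 : HasDerivAt (fun x : ℝ => β₂ * x + 1) β₂ x := by
    simpa using ((hasDerivAt_id x).const_mul β₂).add_const 1
  have h4 : HasDerivAt (fun x : ℝ => β₁ * x - 1) β₁ x := by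
    simpa using ((hasDerivAt_id x).const_mul β₁).sub_const 1
  have h5 := h4.add (h3.mul h2)
  refine h5.congr_deriv ?_
  unfold G
  ring

lemma hasDerivAt_G (β₁ β₂ x : ℝ) :
    HasDerivAt (G β₁ β₂)
      ((β₁ + β₂) * Real.exp (-x * (β₁ + β₂)) * (β₂ * (β₁ + β₂) * x - (β₂ - β₁))) x := by
  have h1 : HasDerivAt (fun x : ℝ => -x * (β₁ + β₂)) (-(β₁ + β₂)) x := by
    simpa using ((hasDerivAt_id x).neg.mul_const (β₁ + β₂))
  have h2 := h1.exp
  have h3 : HasDerivAt (fun x : ℝ => β₁ + β₂ * (β₁ + β₂) * x) (β₂ * (β₁ + β₂)) x := by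
    simpa using (((hasDerivAt_id x).const_mul (β₂ * (β₁ + β₂))).const_add β₁)
  have h5 := (h2.mul h3).const_sub β₁
  refine h5.congr_deriv ?_
  ring


/-- `F_{β₁,β₂}` has exactly one zero, and this zero is `< 1/β₁`. -/
theorem unique_positive_zero (β₁ β₂ : ℝ) (h₁ : 0 < β₁) (h₂ : β₁ < β₂) :
    (∃! x : ℝ, 0 < x ∧ F β₁ β₂ x = 0) ∧
    (∀ x : ℝ, 0 < x → F β₁ β₂ x = 0 → x < 1 / β₁) := by
  have hβ₂ : 0 < β₂ := h₁.trans h₂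
  set s : ℝ := β₁ + β₂ with hs
  have hspos : 0 < s := by positivity
  -- the bound part
  have hbound : ∀ x : ℝ, 0 < x → F β₁ β₂ x = 0 → x < 1 / β₁ := by
    intro x hx hFx
    by_contra hle
    push_neg at hle
    have h1 : 0 ≤ β₁ * x - 1 := by
      have : 1 ≤ β₁ * x := by
        rw [div_le_iff₀ h₁] at hle
        linarith
      linarith
    have h2 : 0 < (β₂ * x + 1) * Real.exp (-x * (β₁ + β₂)) := by positivity
    have : 0 < F β₁ β₂ x := by unfold F; linarith
    linarith
  refine ⟨?_, hbound⟩
  -- derivative facts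
  have hG0 : G β₁ β₂ 0 = 0 := by unfold G; simp
  have hF0 : F β₁ β₂ 0 = 0 := by unfold F; simp
  set xs : ℝ := (β₂ - β₁) / (β₂ * s) with hxs
  have hxspos : 0 < xs := by
    apply div_pos (by linarith) (by positivity)
  -- G strictly anti on [0, xs]
  have hGanti : StrictAntiOn (G β₁ β₂) (Icc 0 xs) := by
    apply strictAntiOn_of_deriv_neg (convex_Icc 0 xs)
      (fun x _ => (hasDerivAt_G β₁ β₂ x).continuousAt.continuousWithinAt)
    intro x hx
    rw [interior_Icc, mem_Ioo] at hx
    rw [(hasDerivAt_G β₁ β₂ x).deriv]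
    have hlt : β₂ * (β₁ + β₂) * x - (β₂ - β₁) < 0 := by
      have := hx.2
      rw [hxs, lt_div_iff₀ (by positivity)] at this
      nlinarith [this]
    have he : 0 < Real.exp (-x * (β₁ + β₂)) := Real.exp_pos _
    have hs' : 0 < β₁ + β₂ := by positivity
    have := mul_neg_of_pos_of_neg (mul_pos hs' he) hlt
    linarith
  -- G strictly mono on [xs, ∞)
  have hGmono : StrictMonoOn (G β₁ β₂) (Ici xs) := by
    apply strictMonoOn_of_deriv_pos (convex_Ici xs)
      (fun x _ => (hasDerivAt_G β₁ β₂ x).continuousAt.continuousWithinAt)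
    intro x hx
    rw [interior_Ici, mem_Ioi] at hx
    rw [(hasDerivAt_G β₁ β₂ x).deriv]
    have hlt : 0 < β₂ * (β₁ + β₂) * x - (β₂ - β₁) := by
      rw [hxs, div_lt_iff₀ (by positivity)] at hx
      nlinarith [hx]
    have he : 0 < Real.exp (-x * (β₁ + β₂)) := Real.exp_pos _
    have hs' : 0 < β₁ + β₂ := by positivity
    exact mul_pos (mul_pos hs' he) hlt
  have hGxs : G β₁ β₂ xs < 0 := by
    have := hGanti (left_mem_Icc.2 hxspos.le) (right_mem_Icc.2 hxspos.le) hxspos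
    rwa [hG0] at this
  -- G tends to β₁ at ∞ : find b with G b > 0
  have htend : Tendsto (fun x : ℝ => Real.exp (-x * s) * (β₁ + β₂ * s * x)) atTop (nhds 0) := by
    have hsx : Tendsto (fun x : ℝ => s * x) atTop atTop := by
      simpa using tendsto_id.const_mul_atTop hspos
    have h1 : Tendsto (fun x : ℝ => Real.exp (-(s * x))) atTop (nhds 0) :=
      Real.tendsto_exp_neg_atTop_nhds_zero.comp hsx
    have h2 : Tendsto (fun x : ℝ => (s * x) * Real.exp (-(s * x))) atTop (nhds 0) := by
      have := (tendsto_pow_mul_exp_neg_atTop_nhds_zero 1).comp hsx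
      simpa [Function.comp_def] using this
    have : Tendsto (fun x : ℝ => β₁ * Real.exp (-(s * x)) + β₂ * ((s * x) * Real.exp (-(s * x))))
        atTop (nhds 0) := by
      simpa using (h1.const_mul β₁).add (h2.const_mul β₂)
    convert this using 2 with x
    ring_nf
  have hGb : ∃ b : ℝ, xs < b ∧ 0 < G β₁ β₂ b := by
    have hev : ∀ᶠ x in atTop, Real.exp (-x * s) * (β₁ + β₂ * s * x) < β₁ :=
      htend.eventually_lt_const h₁
    rcases (hev.and (eventually_gt_atTop xs)).exists with ⟨b, hb1, hb2⟩
    exact ⟨b, hb2, by unfold G; rw [← hs]; linarith⟩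
  obtain ⟨b, hxb, hGbpos⟩ := hGb
  -- x₀ : zero of G in (xs, b)
  have hGcont : ContinuousOn (G β₁ β₂) (Icc xs b) :=
    fun x _ => (hasDerivAt_G β₁ β₂ x).continuousAt.continuousWithinAt
  obtain ⟨x₀, hx₀mem, hGx₀⟩ : ∃ x₀ ∈ Icc xs b, G β₁ β₂ x₀ = 0 := by
    have := intermediate_value_Icc hxb.le hGcont
    have h0 : (0 : ℝ) ∈ Icc (G β₁ β₂ xs) (G β₁ β₂ b) := ⟨hGxs.le, hGbpos.le⟩
    obtain ⟨x₀, hx₀, h⟩ := this h0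
    exact ⟨x₀, hx₀, h⟩
  have hx₀gt : xs < x₀ := by
    rcases lt_or_eq_of_le hx₀mem.1 with h | h
    · exact h
    · exfalso; rw [← h] at hGx₀; linarith
  have hx₀pos : 0 < x₀ := hxspos.trans hx₀gt
  -- G < 0 on (0, x₀)
  have hGneg : ∀ y : ℝ, 0 < y → y < x₀ → G β₁ β₂ y < 0 := by
    intro y hy hyx₀
    rcases le_or_gt y xs with h | h
    · have := hGanti (left_mem_Icc.2 hxspos.le) ⟨hy.le, h⟩ hy
      rwa [hG0] at this
    · have := hGmono (mem_Ici.2 h.le) (mem_Ici.2 hx₀gt.le) hyx₀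
      rwa [hGx₀] at this
  -- G > 0 on (x₀, ∞)
  have hGpos : ∀ y : ℝ, x₀ < y → 0 < G β₁ β₂ y := by
    intro y hy
    have := hGmono (mem_Ici.2 hx₀gt.le) (mem_Ici.2 (hx₀gt.le.trans hy.le)) hy
    rwa [hGx₀] at this
  -- F strictly anti on [0, x₀]
  have hFanti : StrictAntiOn (F β₁ β₂) (Icc 0 x₀) := by
    apply strictAntiOn_of_deriv_neg (convex_Icc 0 x₀)
      (fun x _ => (hasDerivAt_F β₁ β₂ x).continuousAt.continuousWithinAt)
    intro x hx
    rw [interior_Icc, mem_Ioo] at hx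
    rw [(hasDerivAt_F β₁ β₂ x).deriv]
    exact hGneg x hx.1 hx.2
  -- F strictly mono on [x₀, ∞)
  have hFmono : StrictMonoOn (F β₁ β₂) (Ici x₀) := by
    apply strictMonoOn_of_deriv_pos (convex_Ici x₀)
      (fun x _ => (hasDerivAt_F β₁ β₂ x).continuousAt.continuousWithinAt)
    intro x hx
    rw [interior_Ici, mem_Ioi] at hx
    rw [(hasDerivAt_F β₁ β₂ x).deriv]
    exact hGpos x hx
  have hFx₀ : F β₁ β₂ x₀ < 0 := by
    have := hFanti (left_mem_Icc.2 hx₀pos.le) (right_mem_Icc.2 hx₀pos.le) hx₀pos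
    rwa [hF0] at this
  -- F < 0 on (0, x₀]
  have hFneg : ∀ y : ℝ, 0 < y → y ≤ x₀ → F β₁ β₂ y < 0 := by
    intro y hy hyx₀
    have := hFanti (left_mem_Icc.2 hx₀pos.le) ⟨hy.le, hyx₀⟩ hy
    rwa [hF0] at this
  -- a point where F is positive
  set c : ℝ := x₀ + 1 / β₁ + 1 with hc
  have hx₀c : x₀ < c := by
    have : 0 < 1 / β₁ := by positivity
    rw [hc]; linarith
  have hcpos : 0 < c := hx₀pos.trans hx₀c
  have hFc : 0 < F β₁ β₂ c := by
    have h1 : 0 < β₁ * c - 1 := by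
      have : 1 / β₁ < c := by
        rw [hc]; linarith
      rw [div_lt_iff₀ h₁] at this
      nlinarith
    have h2 : 0 < (β₂ * c + 1) * Real.exp (-c * (β₁ + β₂)) := by positivity
    unfold F; linarith
  -- x₁ : zero of F in (x₀, c)
  have hFcont : ContinuousOn (F β₁ β₂) (Icc x₀ c) :=
    fun x _ => (hasDerivAt_F β₁ β₂ x).continuousAt.continuousWithinAt
  obtain ⟨x₁, hx₁mem, hFx₁⟩ : ∃ x₁ ∈ Icc x₀ c, F β₁ β₂ x₁ = 0 := by
    have := intermediate_value_Icc hx₀c.le hFcont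
    have h0 : (0 : ℝ) ∈ Icc (F β₁ β₂ x₀) (F β₁ β₂ c) := ⟨hFx₀.le, hFc.le⟩
    obtain ⟨x₁, hx₁, h⟩ := this h0
    exact ⟨x₁, hx₁, h⟩
  have hx₁gt : x₀ < x₁ := by
    rcases lt_or_eq_of_le hx₁mem.1 with h | h
    · exact h
    · exfalso; rw [← h] at hFx₁; linarith
  have hx₁pos : 0 < x₁ := hx₀pos.trans hx₁gt
  refine ⟨x₁, ⟨hx₁pos, hFx₁⟩, ?_⟩
  rintro y ⟨hy, hFy⟩
  have hyx₀ : x₀ < y := by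
    by_contra h
    push_neg at h
    exact absurd hFy (hFneg y hy h).ne
  exact hFmono.injOn (mem_Ici.2 hyx₀.le) (mem_Ici.2 hx₁gt.le) (hFy.trans hFx₁.symm)
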